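/- In an A-served side-out game to n points: P[D = n] = p_a^n, P[D = n+1] = (1-p_a) p_b^n, and P[D = n+2] = n q p_a^n + p_a (1-p_a) p_b^n, where D is the total number of rallies and q = (1-p_a)(1-p_b). -/

import Mathlib

open scoped BigOperators
open Filter

/-- Side-out scoring: a trajectory is the list of rally outcomes, `true` meaning that the
current server wins the rally.  `soScorers srv g` is the list of scorers (`true` = player A),
where `srv` is the current server. -/
def soScorers : Bool → List Bool → List Bool
  | _, [] => []
  | srv, s :: rest => (if s then [srv] else []) ++ soScorers (if s then srv else !srv) rest

/-- Probability weight of a trajectory of rally outcomes: the server wins a rally with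
probability `pa` (if A serves) or `pb` (if B serves); rallies are independent. -/
def soWeight (pa pb : ℝ) : Bool → List Bool → ℝ
  | _, [] => 1
  | srv, s :: rest =>
      (if srv then (if s then pa else 1 - pa) else (if s then pb else 1 - pb)) *
        soWeight pa pb (if s then srv else !srv) rest

/-- Points scored by player A (first server A). -/
def soScoreA (g : List Bool) : ℕ := (soScorers true g).count true

/-- Points scored by player B (first server A). -/
def soScoreB (g : List Bool) : ℕ := (soScorers true g).count false

/-- The trajectory ends with a rally in which A scores a point. -/
def soLastA (g : List Bool) : Prop :=
  g.getLast? = some true ∧ (soScorers true g).getLast? = some true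

/-- The trajectory ends with a rally in which B scores a point. -/
def soLastB (g : List Bool) : Prop :=
  g.getLast? = some true ∧ (soScorers true g).getLast? = some false

/-- Number of maximal runs of `false` in a list, the first argument being the previous value. -/
def falseRuns : Bool → List Bool → ℕ
  | _, [] => 0
  | prev, b :: rest => (if prev && !b then 1 else 0) + falseRuns b rest

/-- Number of A-interruptions: maximal stretches in which B gains the serve from A and
scores at least one point, i.e. maximal blocks of points scored by B. -/
def soInter (g : List Bool) : ℕ := falseRuns true (soScorers true g)

/-- Number of exchanges: pairs of consecutive rallies in which a player gains the right to
serve and immediately loses it without scoring. -/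
def exchCount : List Bool → ℕ
  | [] => 0
  | true :: rest => exchCount rest
  | [false] => 0
  | false :: true :: rest => exchCount rest
  | false :: false :: rest => 1 + exchCount rest

/-- Probability of a set of trajectories in the side-out model, first server A. -/
noncomputable def soPr (pa pb : ℝ) (E : Set (List Bool)) : ℝ :=
  ∑' g : List Bool, Set.indicator E (soWeight pa pb true) g

/-- Conditional expectation of `f` given the event `E` in the side-out model, first server A. -/
noncomputable def soCondExp (pa pb : ℝ) (E : Set (List Bool)) (f : List Bool → ℝ) : ℝ :=
  (∑' g : List Bool, Set.indicator E (fun g => soWeight pa pb true g * f g) g) / soPr pa pb E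

/-- A complete side-out game to `n` points: play stops as soon as a player reaches `n` points. -/
def soGame (n : ℕ) (g : List Bool) : Prop :=
  (soScoreA g = n ∧ soScoreB g < n ∨ soScoreB g = n ∧ soScoreA g < n) ∧
    ∀ l : List Bool, l <+: g → l ≠ g → soScoreA l < n ∧ soScoreB l < n

def soSrv : Bool → List Bool → Bool
  | srv, [] => srv
  | srv, s :: rest => soSrv (if s then srv else !srv) rest

lemma soScorers_append (srv : Bool) (l₁ l₂ : List Bool) :
    soScorers srv (l₁ ++ l₂) = soScorers srv l₁ ++ soScorers (soSrv srv l₁) l₂ := by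
  induction l₁ generalizing srv with
  | nil => simp [soScorers, soSrv]
  | cons b t ih => simp [soScorers, soSrv, ih]

lemma soSrv_append (srv : Bool) (l₁ l₂ : List Bool) :
    soSrv srv (l₁ ++ l₂) = soSrv (soSrv srv l₁) l₂ := by
  induction l₁ generalizing srv with
  | nil => simp [soSrv]
  | cons b t ih => simp [soSrv, ih]

lemma soWeight_append (pa pb : ℝ) (srv : Bool) (l₁ l₂ : List Bool) :
    soWeight pa pb srv (l₁ ++ l₂) = soWeight pa pb srv l₁ * soWeight pa pb (soSrv srv l₁) l₂ := by
  induction l₁ generalizing srv with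
  | nil => simp [soWeight, soSrv]
  | cons b t ih => simp [soWeight, soSrv, ih, mul_assoc]

lemma soScorers_rep (srv : Bool) (m : ℕ) :
    soScorers srv (List.replicate m true) = List.replicate m srv := by
  induction m with
  | zero => rfl
  | succ k ih => simp [List.replicate_succ, soScorers, ih]

lemma soSrv_rep (srv : Bool) (m : ℕ) : soSrv srv (List.replicate m true) = srv := by
  induction m with
  | zero => rfl
  | succ k ih => simp [List.replicate_succ, soSrv, ih]

lemma soWeight_rep (pa pb : ℝ) (srv : Bool) (m : ℕ) :
    soWeight pa pb srv (List.replicate m true) = (if srv then pa else pb) ^ m := by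
  induction m with
  | zero => simp [soWeight]
  | succ k ih => cases srv <;> simp [List.replicate_succ, soWeight, ih, pow_succ, mul_comm]

lemma soScorers_len (srv : Bool) (g : List Bool) :
    (soScorers srv g).length = g.count true := by
  induction g generalizing srv with
  | nil => rfl
  | cons b t ih => cases b <;> simp [soScorers, ih]

lemma count_tf (l : List Bool) : l.count true + l.count false = l.length := by
  induction l with
  | nil => rfl
  | cons b t ih => cases b <;> simp [ih] <;> omega

lemma scoreAB (g : List Bool) : soScoreA g + soScoreB g = g.count true := by
  rw [soScoreA, soScoreB, count_tf, soScorers_len]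

lemma decomp (g : List Bool) :
    (∃ i, g = List.replicate i true) ∨ ∃ i t, g = List.replicate i true ++ false :: t := by
  induction g with
  | nil => exact Or.inl ⟨0, rfl⟩
  | cons b t ih =>
    cases b
    · exact Or.inr ⟨0, t, rfl⟩
    · rcases ih with ⟨i, rfl⟩ | ⟨i, t', rfl⟩
      · exact Or.inl ⟨i + 1, rfl⟩
      · exact Or.inr ⟨i + 1, t', rfl⟩

lemma scoreA_mono {l g : List Bool} (h : l <+: g) : soScoreA l ≤ soScoreA g := by
  obtain ⟨t, rfl⟩ := h
  simp [soScoreA, soScorers_append, List.count_append]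

lemma scoreB_mono {l g : List Bool} (h : l <+: g) : soScoreB l ≤ soScoreB g := by
  obtain ⟨t, rfl⟩ := h
  simp [soScoreB, soScorers_append, List.count_append]

lemma prefix_dropLast {l g : List Bool} (h : l <+: g) (hne : l ≠ g) : l <+: g.dropLast := by
  obtain ⟨t, rfl⟩ := h
  rcases t with _ | ⟨b, t⟩
  · simp at hne
  · rw [List.dropLast_append_of_ne_nil (by simp)]
    exact List.prefix_append _ _

-- scores of the explicit trajectories
lemma score_rep (m : ℕ) : soScoreA (List.replicate m true) = m ∧ soScoreB (List.replicate m true) = 0 := by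
  simp [soScoreA, soScoreB, soScorers_rep, List.count_replicate]

lemma soScorers_false (srv : Bool) (rest : List Bool) :
    soScorers srv (false :: rest) = soScorers (!srv) rest := by simp [soScorers]

lemma soSrv_false (srv : Bool) (rest : List Bool) :
    soSrv srv (false :: rest) = soSrv (!srv) rest := by simp [soSrv]

lemma soWeight_false (pa pb : ℝ) (srv : Bool) (rest : List Bool) :
    soWeight pa pb srv (false :: rest) =
      (if srv then 1 - pa else 1 - pb) * soWeight pa pb (!srv) rest := by simp [soWeight]

lemma scorers_two (i j : ℕ) :
    soScorers true (List.replicate i true ++ false :: List.replicate j true) =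
      List.replicate i true ++ List.replicate j false := by
  rw [soScorers_append, soSrv_rep, soScorers_rep, soScorers_false, soScorers_rep]
  rfl

lemma scorers_three (i j l : ℕ) :
    soScorers true (List.replicate i true ++ false :: (List.replicate j true ++ false :: List.replicate l true)) =
      List.replicate i true ++ (List.replicate j false ++ List.replicate l true) := by
  rw [soScorers_append, soSrv_rep, soScorers_rep, soScorers_false, soScorers_append,
    soSrv_rep, soScorers_rep, soScorers_false, soScorers_rep]
  rfl

lemma all_true {g : List Bool} (h : g.count false = 0) : g = List.replicate g.length true := by
  apply List.eq_replicate_length.2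
  intro b hb
  cases b
  · have := List.count_pos_iff.mpr hb
    omega
  · rfl

lemma rep_false_inj : ∀ {i i' : ℕ} {t t' : List Bool},
    List.replicate i true ++ false :: t = List.replicate i' true ++ false :: t' →
    i = i' ∧ t = t' := by
  intro i
  induction i with
  | zero =>
    intro i' t t' h
    cases i' with
    | zero => simpa using h
    | succ k => simp [List.replicate_succ] at h
  | succ k ih =>
    intro i' t t' h
    cases i' with
    | zero => simp [List.replicate_succ] at h
    | succ k' =>
      simp only [List.replicate_succ, List.cons_append, List.cons.injEq] at h
      obtain ⟨h1, h2⟩ := ih h.2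
      exact ⟨by omega, h2⟩

lemma dropLast_rep (m : ℕ) : (List.replicate m true).dropLast = List.replicate (m - 1) true := by
  cases m with
  | zero => rfl
  | succ k => rw [List.replicate_succ', List.dropLast_concat]; rfl

lemma score_two (i j : ℕ) :
    soScoreA (List.replicate i true ++ false :: List.replicate j true) = i ∧
    soScoreB (List.replicate i true ++ false :: List.replicate j true) = j := by
  simp [soScoreA, soScoreB, scorers_two, List.count_append, List.count_replicate]

lemma score_three (i j l : ℕ) :
    soScoreA (List.replicate i true ++ false :: (List.replicate j true ++ false :: List.replicate l true)) = i + l ∧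
    soScoreB (List.replicate i true ++ false :: (List.replicate j true ++ false :: List.replicate l true)) = j := by
  simp [soScoreA, soScoreB, scorers_three, List.count_append, List.count_replicate]

lemma valid_aux {n : ℕ} {g : List Bool}
    (hw : soScoreA g = n ∧ soScoreB g < n ∨ soScoreB g = n ∧ soScoreA g < n)
    (hA : soScoreA g.dropLast < n) (hB : soScoreB g.dropLast < n) : soGame n g := by
  refine ⟨hw, fun l hl hne => ?_⟩
  have h := prefix_dropLast hl hne
  exact ⟨lt_of_le_of_lt (scoreA_mono h) hA, lt_of_le_of_lt (scoreB_mono h) hB⟩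

lemma valid1 {n : ℕ} (hn : 2 ≤ n) : soGame n (List.replicate n true) := by
  obtain ⟨hA, hB⟩ := score_rep n
  apply valid_aux (Or.inl ⟨hA, by omega⟩)
  · rw [dropLast_rep]; rw [(score_rep (n-1)).1]; omega
  · rw [dropLast_rep]; rw [(score_rep (n-1)).2]; omega

lemma valid2 {n : ℕ} (hn : 2 ≤ n) : soGame n (false :: List.replicate n true) := by
  have e0 : ∀ m : ℕ, false :: List.replicate m true =
      List.replicate 0 true ++ false :: List.replicate m true := fun m => rfl
  have hd : (false :: List.replicate n true).dropLast = false :: List.replicate (n-1) true := by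
    have : false :: List.replicate n true = [false] ++ List.replicate n true := rfl
    rw [this, List.dropLast_append_of_ne_nil (by simp; omega), dropLast_rep]
    rfl
  apply valid_aux
  · exact Or.inr ⟨by rw [e0, (score_two 0 n).2], by rw [e0, (score_two 0 n).1]; omega⟩
  · rw [hd, e0, (score_two 0 (n-1)).1]; omega
  · rw [hd, e0, (score_two 0 (n-1)).2]; omega

lemma valid3 {n : ℕ} (hn : 2 ≤ n) : soGame n (true :: false :: List.replicate n true) := by
  have e0 : ∀ m : ℕ, true :: false :: List.replicate m true =
      List.replicate 1 true ++ false :: List.replicate m true := fun m => rfl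
  have hd : (true :: false :: List.replicate n true).dropLast =
      true :: false :: List.replicate (n-1) true := by
    have : true :: false :: List.replicate n true = [true, false] ++ List.replicate n true := rfl
    rw [this, List.dropLast_append_of_ne_nil (by simp; omega), dropLast_rep]
    rfl
  apply valid_aux
  · exact Or.inr ⟨by rw [e0, (score_two 1 n).2], by rw [e0, (score_two 1 n).1]; omega⟩
  · rw [hd, e0, (score_two 1 (n-1)).1]; omega
  · rw [hd, e0, (score_two 1 (n-1)).2]; omega

lemma valid4 {n i : ℕ} (hn : 2 ≤ n) (hi : i < n) :
    soGame n (List.replicate i true ++ false :: false :: List.replicate (n - i) true) := by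
  have e0 : ∀ m : ℕ, List.replicate i true ++ false :: false :: List.replicate m true =
      List.replicate i true ++ false :: (List.replicate 0 true ++ false :: List.replicate m true) :=
    fun m => rfl
  have hd : (List.replicate i true ++ false :: false :: List.replicate (n - i) true).dropLast =
      List.replicate i true ++ false :: false :: List.replicate (n - i - 1) true := by
    have : List.replicate i true ++ false :: false :: List.replicate (n - i) true =
        (List.replicate i true ++ [false, false]) ++ List.replicate (n - i) true := by simp
    rw [this, List.dropLast_append_of_ne_nil (by simp; omega), dropLast_rep]
    simp
  apply valid_aux
  · refine Or.inl ⟨?_, ?_⟩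
    · rw [e0, (score_three i 0 (n-i)).1]; omega
    · rw [e0, (score_three i 0 (n-i)).2]; omega
  · rw [hd, e0, (score_three i 0 (n-i-1)).1]; omega
  · rw [hd, e0, (score_three i 0 (n-i-1)).2]; omega

lemma count_le_len (g : List Bool) : g.count true ≤ g.length := List.count_le_length

lemma winner_sum {n : ℕ} {g : List Bool} (hg : soGame n g) :
    n ≤ g.count true := by
  rw [← scoreAB]
  rcases hg.1 with ⟨h, _⟩ | ⟨h, _⟩ <;> omega

lemma rep_prefix_contra {n i : ℕ} {g t : List Bool} (hg : soGame n g)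
    (he : g = List.replicate i true ++ t) (hi : n ≤ i) (ht : t ≠ []) : False := by
  have hp : List.replicate n true <+: g := by
    rw [he, ← Nat.add_sub_cancel' hi, List.replicate_add, List.append_assoc]
    exact ⟨_, rfl⟩
  have hne : List.replicate n true ≠ g := by
    intro h
    have := congrArg List.length h
    simp [he] at this
    have := List.length_pos_iff.2 ht
    omega
  have := (hg.2 _ hp hne).1
  rw [(score_rep n).1] at this
  omega

lemma id1 {n : ℕ} (hn : 2 ≤ n) :
    {g : List Bool | soGame n g ∧ g.length = n} = {List.replicate n true} := by
  ext g
  simp only [Set.mem_setOf_eq, Set.mem_singleton_iff]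
  constructor
  · rintro ⟨hg, hlen⟩
    have h1 := winner_sum hg
    have h2 := count_le_len g
    have h3 := count_tf g
    have hcf : g.count false = 0 := by omega
    rw [all_true hcf, hlen]
  · rintro rfl
    exact ⟨valid1 hn, by simp⟩

lemma id2 {n : ℕ} (hn : 2 ≤ n) :
    {g : List Bool | soGame n g ∧ g.length = n + 1} = {false :: List.replicate n true} := by
  ext g
  simp only [Set.mem_setOf_eq, Set.mem_singleton_iff]
  constructor
  · rintro ⟨hg, hlen⟩
    have h1 := winner_sum hg
    have h2 := count_le_len g
    have h3 := count_tf g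
    have hsum := scoreAB g
    -- count false cannot be 0
    have hcf : g.count false ≠ 0 := by
      intro hcf
      have he := all_true hcf
      rw [hlen] at he
      have hA := (score_rep (n+1)).1
      have hB := (score_rep (n+1)).2
      rw [← he] at hA hB
      rcases hg.1 with ⟨h, _⟩ | ⟨h, _⟩ <;> omega
    have hcf1 : g.count false = 1 := by omega
    rcases decomp g with ⟨i, rfl⟩ | ⟨i, t, rfl⟩
    · simp [List.count_replicate] at hcf
    · have hct : t.count false = 0 := by
        simp [List.count_append, List.count_replicate] at hcf1
        omega
      obtain ⟨j, rfl⟩ : ∃ j, t = List.replicate j true := ⟨t.length, all_true hct⟩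
      have hlij : i + (j + 1) = n + 1 := by simpa using hlen
      have hA := (score_two i j).1
      have hB := (score_two i j).2
      rcases hg.1 with ⟨h, h'⟩ | ⟨h, h'⟩
      · exact absurd (rep_prefix_contra hg rfl (by omega) (by simp)) (not_false)
      · have hjn : j = n := by omega
        have hi0 : i = 0 := by omega
        subst hjn; subst hi0; rfl
  · rintro rfl
    exact ⟨valid2 hn, by simp⟩

lemma id3 {n : ℕ} (hn : 2 ≤ n) :
    {g : List Bool | soGame n g ∧ g.length = n + 2} =
      ↑(insert (true :: false :: List.replicate n true)
        ((Finset.range n).image fun i =>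
          List.replicate i true ++ false :: false :: List.replicate (n - i) true)) := by
  ext g
  simp only [Set.mem_setOf_eq, Finset.coe_insert, Set.mem_insert_iff, Finset.coe_image,
    Set.mem_image, Finset.mem_coe, Finset.mem_range]
  constructor
  · rintro ⟨hg, hlen⟩
    have h1 := winner_sum hg
    have h2 := count_le_len g
    have h3 := count_tf g
    have hsum := scoreAB g
    have hcf : g.count false ≠ 0 := by
      intro hcf
      have he := all_true hcf
      rw [hlen] at he
      have hA := (score_rep (n+2)).1
      have hB := (score_rep (n+2)).2
      rw [← he] at hA hB
      rcases hg.1 with ⟨h, _⟩ | ⟨h, _⟩ <;> omega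
    have hcf2 : g.count false ≤ 2 := by omega
    rcases decomp g with ⟨i, rfl⟩ | ⟨i, t, rfl⟩
    · simp [List.count_replicate] at hcf
    · have hcfg : (List.replicate i true ++ false :: t).count false = t.count false + 1 := by
        simp [List.count_append, List.count_replicate]
      by_cases hct : t.count false = 0
      · obtain ⟨j, rfl⟩ : ∃ j, t = List.replicate j true := ⟨t.length, all_true hct⟩
        have hlij : i + (j + 1) = n + 2 := by simpa using hlen
        have hA := (score_two i j).1
        have hB := (score_two i j).2
        rcases hg.1 with ⟨h, h'⟩ | ⟨h, h'⟩
        · exact absurd (rep_prefix_contra hg rfl (by omega) (by simp)) not_false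
        · have hjn : j = n := by omega
          have hi1 : i = 1 := by omega
          subst hjn; subst hi1
          exact Or.inl rfl
      · rcases decomp t with ⟨j, rfl⟩ | ⟨j, u, rfl⟩
        · simp [List.count_replicate] at hct
        · have hcu : u.count false = 0 := by
            rw [hcfg] at hcf2
            simp [List.count_append, List.count_replicate] at hcf2
            omega
          obtain ⟨l, rfl⟩ : ∃ l, u = List.replicate l true := ⟨u.length, all_true hcu⟩
          have hlij : i + (j + (l + 1) + 1) = n + 2 := by simpa using hlen
          have hA := (score_three i j l).1
          have hB := (score_three i j l).2
          rcases hg.1 with ⟨h, h'⟩ | ⟨h, h'⟩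
          · -- A wins: j = 0, l ≥ 1
            have hil : i + l = n := by omega
            have hj0 : j = 0 := by omega
            subst hj0
            have hl1 : l ≠ 0 := fun hl0 =>
              rep_prefix_contra hg rfl (by omega) (by simp)
            refine Or.inr ⟨i, by omega, ?_⟩
            have : n - i = l := by omega
            rw [this]
            rfl
          · -- B wins: j = n, i = l = 0
            have hi0 : i = 0 := by omega
            have hl0 : l = 0 := by omega
            subst hi0; subst hl0
            exfalso
            have hp : (List.replicate 0 true ++ false :: List.replicate j true) <+:
                (List.replicate 0 true ++ false :: (List.replicate j true ++
                  false :: List.replicate 0 true)) := ⟨[false], by simp⟩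
            have hne : (List.replicate 0 true ++ false :: List.replicate j true) ≠
                (List.replicate 0 true ++ false :: (List.replicate j true ++
                  false :: List.replicate 0 true)) := fun hh => by
              have := congrArg List.length hh
              simp at this
            have h2' := (hg.2 _ hp hne).2
            rw [(score_two 0 j).2] at h2'
            omega
  · rintro (rfl | ⟨i, hi, rfl⟩)
    · exact ⟨valid3 hn, by simp⟩
    · exact ⟨valid4 hn hi, by simp; omega⟩

lemma soPr_coe (pa pb : ℝ) (s : Finset (List Bool)) :
    soPr pa pb ↑s = ∑ g ∈ s, soWeight pa pb true g := by
  rw [soPr, tsum_eq_sum (s := s) (fun b hb => Set.indicator_of_notMem (by simpa using hb) _)]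
  exact Finset.sum_congr rfl fun g hg => Set.indicator_of_mem (by simpa using hg) _


theorem stmt_11 (n : ℕ) (hn : 2 ≤ n) (pa pb : ℝ) (hpa0 : 0 ≤ pa) (hpa1 : pa ≤ 1)
    (hpb0 : 0 ≤ pb) (hpb1 : pb ≤ 1) :
    soPr pa pb {g : List Bool | soGame n g ∧ g.length = n} = pa ^ n ∧
    soPr pa pb {g : List Bool | soGame n g ∧ g.length = n + 1} = (1 - pa) * pb ^ n ∧
    soPr pa pb {g : List Bool | soGame n g ∧ g.length = n + 2} =
      (n : ℝ) * ((1 - pa) * (1 - pb)) * pa ^ n + pa * (1 - pa) * pb ^ n := by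

  have w1 : soWeight pa pb true (List.replicate n true) = pa ^ n := by
    rw [soWeight_rep]; simp
  have w2 : soWeight pa pb true (false :: List.replicate n true) = (1 - pa) * pb ^ n := by
    rw [soWeight_false, soWeight_rep]; simp
  have w3 : soWeight pa pb true (true :: false :: List.replicate n true) =
      pa * ((1 - pa) * pb ^ n) := by
    have : true :: false :: List.replicate n true =
        List.replicate 1 true ++ (false :: List.replicate n true) := rfl
    rw [this, soWeight_append, soSrv_rep, soWeight_rep, soWeight_false, soWeight_rep]
    simp
  have w4 : ∀ i < n, soWeight pa pb true
      (List.replicate i true ++ false :: false :: List.replicate (n - i) true) =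
      (1 - pa) * (1 - pb) * pa ^ n := by
    intro i hi
    rw [soWeight_append, soSrv_rep, soWeight_rep, soWeight_false, soWeight_false,
      soWeight_rep]
    norm_num
    have hpow : pa ^ i * pa ^ (n - i) = pa ^ n := by
      rw [← pow_add]; congr 1; omega
    linear_combination (1 - pa) * (1 - pb) * hpow
  refine ⟨?_, ?_, ?_⟩
  · rw [id1 hn, show ({List.replicate n true} : Set (List Bool)) =
      ↑({List.replicate n true} : Finset (List Bool)) by simp, soPr_coe]
    simpa using w1
  · rw [id2 hn, show ({false :: List.replicate n true} : Set (List Bool)) =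
      ↑({false :: List.replicate n true} : Finset (List Bool)) by simp, soPr_coe]
    simpa using w2
  · rw [id3 hn, soPr_coe]
    have hnotmem : true :: false :: List.replicate n true ∉
        (Finset.range n).image (fun i =>
          List.replicate i true ++ false :: false :: List.replicate (n - i) true) := by
      simp only [Finset.mem_image, Finset.mem_range, not_exists]
      rintro i ⟨hi, he⟩
      have := congrArg (List.count false) he
      simp [List.count_append, List.count_replicate, List.count_cons] at this
    rw [Finset.sum_insert hnotmem, Finset.sum_image ?inj]
    case inj =>
      intro a ha b hb he
      exact (rep_false_inj he).1
    rw [w3, Finset.sum_congr rfl (fun i hi => w4 i (Finset.mem_range.1 hi)),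
      Finset.sum_const, Finset.card_range, nsmul_eq_mul]
    ring
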